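/- arXiv:1306.4397 — 2 statements merged into one kernel-verified Lean document; each statement's English description precedes it below -/
import Mathlib

section
/- L1-loss bound (deterministic core of Theorem 1, inequality (18)): assume y = Xβ* + ε with (2/n)·max_{k,j} |X_{kj}^T ε| ≤ λα, let s = |G(β*)|, and assume the REgroup(κ, s) hypothesis holds. Then every minimizer β̂ of Q satisfies ‖β̂ − β*‖₁ ≤ 16 s λα / κ². -/
/-- AM-GM for exponentials: `m * exp(mean x) ≤ ∑ exp (x j)`. -/
lemma sum_exp_ge_card_mul_exp_avg {m : ℕ} (hm : 0 < m) (x : Fin m → ℝ) :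
    (m : ℝ) * Real.exp ((∑ j, x j) / m) ≤ ∑ j, Real.exp (x j) := by
  have hm' : (0:ℝ) < m := by exact_mod_cast hm
  set xb := (∑ j, x j) / m with hxb
  have hsum : (m:ℝ) * xb = ∑ j, x j := by
    rw [hxb]; field_simp
  have key : ∀ j : Fin m, Real.exp xb * (1 + (x j - xb)) ≤ Real.exp (x j) := by
    intro j
    have h := Real.add_one_le_exp (x j - xb)
    have hpos := Real.exp_pos xb
    calc Real.exp xb * (1 + (x j - xb)) ≤ Real.exp xb * Real.exp (x j - xb) := by
          nlinarith
      _ = Real.exp (x j) := by rw [← Real.exp_add]; ring_nf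
  calc (m:ℝ) * Real.exp xb = ∑ j : Fin m, Real.exp xb * (1 + (x j - xb)) := by
        rw [← Finset.mul_sum]
        have : ∑ j : Fin m, (1 + (x j - xb)) = (m:ℝ) := by
          rw [Finset.sum_add_distrib, Finset.sum_sub_distrib]
          simp [Finset.card_univ]
          linarith [hsum]
        rw [this]; ring
    _ ≤ ∑ j, Real.exp (x j) := Finset.sum_le_sum (fun j _ => key j)




/-- Pure arithmetic core. -/
lemma les_arith (s' lam α κ ν F A B S C sG : ℝ)
    (hs0 : 0 ≤ s') (hla : 0 < lam * α) (hκ : 0 < κ) (hν : 0 < ν)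
    (hF : 0 ≤ F) (hB0 : 0 ≤ B) (hS0 : 0 ≤ S) (hC0 : 0 ≤ C) (hsG : 0 ≤ sG)
    (hbasic : F ≤ ν * (lam * α) * (A - B))
    (hRE2 : B ≤ A → κ ^ 2 * (ν * S) ≤ 4 * F)
    (hsum : A + sG ≤ 2 * C)
    (hCS : C ^ 2 ≤ s' * S) :
    sG + B ≤ 16 * s' * (lam * α) / κ ^ 2 := by
  have hκ2 : 0 < κ ^ 2 := by positivity
  have hrhs : 0 ≤ 16 * s' * (lam * α) / κ ^ 2 := by positivity
  have hcone : B ≤ A := by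
    by_contra h
    push_neg at h
    nlinarith [hF.trans hbasic, mul_pos (mul_pos hν hla) (sub_pos.mpr h)]
  have hKS : κ ^ 2 * S ≤ 8 * (lam * α) * C := by
    have h4 := hRE2 hcone
    have h5 : κ ^ 2 * (ν * S) ≤ 4 * (ν * (lam * α) * (A - B)) := by linarith
    have h6 := (mul_le_mul_iff_right₀ hν).mp
      (show ν * (κ ^ 2 * S) ≤ ν * (4 * (lam * α) * (A - B)) by nlinarith)
    nlinarith
  have hCle : C ≤ Real.sqrt s' * Real.sqrt S := by
    calc C ≤ Real.sqrt (s' * S) := (Real.le_sqrt hC0 (by positivity)).mpr hCS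
      _ = Real.sqrt s' * Real.sqrt S := Real.sqrt_mul hs0 S
  have hu0 : 0 ≤ Real.sqrt S := Real.sqrt_nonneg S
  have huS : Real.sqrt S ^ 2 = S := Real.sq_sqrt hS0
  have hss : Real.sqrt s' ^ 2 = s' := Real.sq_sqrt hs0
  have hsr0 : 0 ≤ Real.sqrt s' := Real.sqrt_nonneg _
  rcases eq_or_lt_of_le hu0 with h | h
  · -- √S = 0, hence S = 0, C = 0
    have hSz : S = 0 := by rw [← huS, ← h]; ring
    have hCz : C = 0 := by nlinarith
    linarith
  · have hku : κ ^ 2 * Real.sqrt S ≤ 8 * (lam * α) * Real.sqrt s' := by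
      have h7 : κ ^ 2 * Real.sqrt S * Real.sqrt S
          ≤ 8 * (lam * α) * Real.sqrt s' * Real.sqrt S := by nlinarith
      exact (mul_le_mul_iff_left₀ h).mp h7
    rw [le_div_iff₀ hκ2]
    have h8 : sG + B ≤ 2 * (Real.sqrt s' * Real.sqrt S) := by linarith
    nlinarith [mul_le_mul_of_nonneg_left hku (by positivity : (0:ℝ) ≤ 2 * Real.sqrt s')]

/-- Finset-level core of the L1 bound. -/
lemma les_aux (K s : ℕ) (pr : Fin K → ℝ) (hpr : ∀ k, 1 ≤ pr k)
    (G : Finset (Fin K)) (hs : s = G.card)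
    (lam α κ ν F : ℝ) (hlam : 0 < lam) (hα : 0 < α) (hκ : 0 < κ)
    (hν : 0 < ν) (hF : 0 ≤ F)
    (nrm1 nrm2 : Fin K → ℝ) (h1 : ∀ k, 0 ≤ nrm1 k) (h2 : ∀ k, 0 ≤ nrm2 k)
    (hcs : ∀ k, nrm1 k ^ 2 ≤ pr k * nrm2 k)
    (hbasic : F ≤ ν * (lam * α) *
      ((∑ k ∈ G, (1 + 2 * pr k) * nrm1 k) - ∑ k ∈ Gᶜ, nrm1 k))
    (hRE2 : (∑ k ∈ Gᶜ, nrm1 k) ≤ (∑ k ∈ G, (1 + 2 * pr k) * nrm1 k) →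
      κ ^ 2 * (ν * (∑ k ∈ G, pr k * (1 + pr k) ^ 2 * nrm2 k)) ≤ 4 * F) :
    (∑ k, nrm1 k) ≤ 16 * s * (lam * α) / κ ^ 2 := by
  have hterm0 : ∀ k, 0 ≤ pr k * (1 + pr k) ^ 2 * nrm2 k := fun k =>
    mul_nonneg (mul_nonneg (by linarith [hpr k]) (sq_nonneg _)) (h2 k)
  -- termwise: (2+2p) nrm1 ≤ 2 √(p(1+p)² nrm2)
  have hterm : ∀ k, (2 + 2 * pr k) * nrm1 k ≤
      2 * Real.sqrt (pr k * (1 + pr k) ^ 2 * nrm2 k) := by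
    intro k
    have hp0 : (0:ℝ) < pr k := lt_of_lt_of_le one_pos (hpr k)
    have hpn : 0 ≤ pr k * nrm2 k := mul_nonneg hp0.le (h2 k)
    have h1' : nrm1 k ≤ Real.sqrt (pr k * nrm2 k) :=
      (Real.le_sqrt (h1 k) hpn).mpr (hcs k)
    have heq : Real.sqrt (pr k * (1 + pr k) ^ 2 * nrm2 k)
        = (1 + pr k) * Real.sqrt (pr k * nrm2 k) := by
      rw [show pr k * (1 + pr k) ^ 2 * nrm2 k = (1 + pr k) ^ 2 * (pr k * nrm2 k) by ring,
        Real.sqrt_mul (sq_nonneg _), Real.sqrt_sq (by linarith)]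
    rw [heq]
    nlinarith [h1 k, Real.sqrt_nonneg (pr k * nrm2 k)]
  have hsum : (∑ k ∈ G, (1 + 2 * pr k) * nrm1 k) + (∑ k ∈ G, nrm1 k)
      ≤ 2 * ∑ k ∈ G, Real.sqrt (pr k * (1 + pr k) ^ 2 * nrm2 k) := by
    rw [← Finset.sum_add_distrib, Finset.mul_sum]
    refine Finset.sum_le_sum (fun k _ => ?_)
    have := hterm k
    linarith
  have hCS : (∑ k ∈ G, Real.sqrt (pr k * (1 + pr k) ^ 2 * nrm2 k)) ^ 2
      ≤ (s:ℝ) * ∑ k ∈ G, pr k * (1 + pr k) ^ 2 * nrm2 k := by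
    have hcs2 := Finset.sum_mul_sq_le_sq_mul_sq G (fun _ => (1:ℝ))
      (fun k => Real.sqrt (pr k * (1 + pr k) ^ 2 * nrm2 k))
    simp only [one_mul, one_pow, Finset.sum_const, nsmul_eq_mul, mul_one] at hcs2
    have hsq : ∀ k ∈ G, Real.sqrt (pr k * (1 + pr k) ^ 2 * nrm2 k) ^ 2
        = pr k * (1 + pr k) ^ 2 * nrm2 k := fun k _ => Real.sq_sqrt (hterm0 k)
    rw [Finset.sum_congr rfl hsq] at hcs2
    rw [hs]
    exact hcs2
  have htot : (∑ k, nrm1 k) = (∑ k ∈ G, nrm1 k) + ∑ k ∈ Gᶜ, nrm1 k :=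
    (Finset.sum_add_sum_compl G nrm1).symm
  rw [htot]
  exact les_arith (s:ℝ) lam α κ ν F _ _ _ _ _
    (Nat.cast_nonneg s) (mul_pos hlam hα) hκ hν hF
    (Finset.sum_nonneg fun k _ => h1 k)
    (Finset.sum_nonneg fun k _ => hterm0 k)
    (Finset.sum_nonneg fun k _ => Real.sqrt_nonneg _)
    (Finset.sum_nonneg fun k _ => h1 k)
    hbasic hRE2 hsum hCS


/-- **L1-loss bound** (deterministic core of Theorem 1, inequality (18)).
Assume `y = X β* + ε` with `(2/n) max_{k,j} |X kjᵀ ε| ≤ λ α`, let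
`s = |G(β*)|`, and assume the REgroup(κ, s) hypothesis.  Then every minimizer
`β̂` of `Q` (with weights `w k = p k`) satisfies
`‖β̂ - β*‖₁ ≤ 16 s λ α / κ²`. -/
theorem les_l1_bound (n K : ℕ) (hn : 0 < n) (hK : 0 < K)
    (p : Fin K → ℕ) (hp : ∀ k, 1 ≤ p k)
    (X : Fin n → (Σ k : Fin K, Fin (p k)) → ℝ)
    (βstar : (Σ k : Fin K, Fin (p k)) → ℝ) (ε y : Fin n → ℝ)
    (hmodel : ∀ i, y i = (∑ j : Σ k : Fin K, Fin (p k), X i j * βstar j) + ε i)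
    (lam α : ℝ) (hlam : 0 < lam) (hα : 0 < α)
    (hnoise : ∀ j : Σ k : Fin K, Fin (p k),
      (2 / (n : ℝ)) * |∑ i : Fin n, X i j * ε i| ≤ lam * α)
    (G : Finset (Fin K)) (hG : ∀ k, k ∈ G ↔ ∃ j : Fin (p k), βstar ⟨k, j⟩ ≠ 0)
    (s : ℕ) (hs : s = G.card)
    (κ : ℝ) (hκ : 0 < κ)
    (hRE : ∀ G' : Finset (Fin K), G'.card ≤ s →
      ∀ Δ : (Σ k : Fin K, Fin (p k)) → ℝ, Δ ≠ 0 →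
      (∑ k ∈ G'ᶜ, ∑ j : Fin (p k), |Δ ⟨k, j⟩|) ≤
        (∑ k ∈ G', (1 + 2 * (p k : ℝ)) * ∑ j : Fin (p k), |Δ ⟨k, j⟩|) →
      κ * Real.sqrt (n : ℝ) *
          Real.sqrt (∑ k ∈ G', (p k : ℝ) * (1 + (p k : ℝ)) ^ 2 * ∑ j : Fin (p k), (Δ ⟨k, j⟩) ^ 2) ≤
        2 * Real.sqrt (∑ i : Fin n, (∑ j : Σ k : Fin K, Fin (p k), X i j * Δ j) ^ 2))
    (βh : (Σ k : Fin K, Fin (p k)) → ℝ)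
    (hmin : IsMinOn
      (fun β : (Σ k : Fin K, Fin (p k)) → ℝ =>
        (1 / (2 * (n : ℝ))) * ∑ i : Fin n, (y i - ∑ j : Σ k : Fin K, Fin (p k), X i j * β j) ^ 2
          + lam * ∑ k : Fin K, (p k : ℝ) * Real.log (∑ j : Fin (p k), Real.exp (α * |β ⟨k, j⟩|)))
      Set.univ βh) :
    ∑ j : Σ k : Fin K, Fin (p k), |βh j - βstar j| ≤
      16 * (s : ℝ) * (lam * α) / κ ^ 2 := by
  have hn' : (0:ℝ) < n := by exact_mod_cast hn
  by_cases hΔ0 : (fun j : (Σ k : Fin K, Fin (p k)) => βh j - βstar j) = 0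
  · have hz : ∀ j : (Σ k : Fin K, Fin (p k)), βh j - βstar j = 0 := fun j => congrFun hΔ0 j
    have hzz : (∑ j : Σ k : Fin K, Fin (p k), |βh j - βstar j|) = 0 :=
      Finset.sum_eq_zero (fun j _ => by rw [hz j, abs_zero])
    rw [hzz]; positivity
  set D : (Σ k : Fin K, Fin (p k)) → ℝ := fun j => βh j - βstar j with hD
  have hDj : ∀ j, D j = βh j - βstar j := fun j => by rw [hD]
  -- model rewrites
  have hy1 : ∀ i, y i - (∑ j : Σ k : Fin K, Fin (p k), X i j * βstar j) = ε i :=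
    fun i => by rw [hmodel i]; ring
  have hy2 : ∀ i, y i - (∑ j : Σ k : Fin K, Fin (p k), X i j * βh j)
      = ε i - ∑ j : Σ k : Fin K, Fin (p k), X i j * D j := by
    intro i
    have hXD : (∑ j : Σ k : Fin K, Fin (p k), X i j * βh j)
        = (∑ j : Σ k : Fin K, Fin (p k), X i j * βstar j)
          + ∑ j : Σ k : Fin K, Fin (p k), X i j * D j := by
      rw [← Finset.sum_add_distrib]
      refine Finset.sum_congr rfl (fun j _ => ?_)
      rw [hDj j]; ring
    rw [hmodel i, hXD]; ring
  -- abbreviations (as plain terms)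
  -- E := ∑ i, ε i * (XD)_i ; F := ∑ i, (XD)_i ^ 2
  -- basic inequality from minimality
  have hm := isMinOn_iff.mp hmin βstar (Set.mem_univ βstar)
  rw [Finset.sum_congr rfl (fun i _ => by rw [hy2 i] :
        ∀ i ∈ Finset.univ, (y i - ∑ j : Σ k : Fin K, Fin (p k), X i j * βh j) ^ 2
          = (ε i - ∑ j : Σ k : Fin K, Fin (p k), X i j * D j) ^ 2),
      Finset.sum_congr rfl (fun i _ => by rw [hy1 i] :
        ∀ i ∈ Finset.univ, (y i - ∑ j : Σ k : Fin K, Fin (p k), X i j * βstar j) ^ 2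
          = (ε i) ^ 2)] at hm
  have hsq : (∑ i, (ε i - ∑ j : Σ k : Fin K, Fin (p k), X i j * D j) ^ 2)
      = (∑ i, (ε i)^2) - 2 * (∑ i, ε i * ∑ j : Σ k : Fin K, Fin (p k), X i j * D j)
        + ∑ i, (∑ j : Σ k : Fin K, Fin (p k), X i j * D j) ^ 2 := by
    rw [Finset.sum_congr rfl (fun i _ => by ring :
        ∀ i ∈ Finset.univ, (ε i - ∑ j : Σ k : Fin K, Fin (p k), X i j * D j) ^ 2
          = (ε i)^2 - 2 * (ε i * ∑ j : Σ k : Fin K, Fin (p k), X i j * D j)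
            + (∑ j : Σ k : Fin K, Fin (p k), X i j * D j) ^ 2),
      Finset.sum_add_distrib, Finset.sum_sub_distrib, ← Finset.mul_sum]
  rw [hsq] at hm
  -- names for the big scalars
  set E : ℝ := ∑ i, ε i * ∑ j : Σ k : Fin K, Fin (p k), X i j * D j with hE
  set F : ℝ := ∑ i, (∑ j : Σ k : Fin K, Fin (p k), X i j * D j) ^ 2 with hF
  set Pstar : ℝ := ∑ k : Fin K, (p k : ℝ) * Real.log (∑ j : Fin (p k), Real.exp (α * |βstar ⟨k, j⟩|)) with hPs
  set Phat : ℝ := ∑ k : Fin K, (p k : ℝ) * Real.log (∑ j : Fin (p k), Real.exp (α * |βh ⟨k, j⟩|)) with hPh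
  have hstep3 : F - 2 * E ≤ 2 * (n:ℝ) * (lam * (Pstar - Phat)) := by
    have h2 : (1/(2*(n:ℝ))) * (F - 2*E) ≤ lam * (Pstar - Phat) := by nlinarith [hm]
    have h3 := mul_le_mul_of_nonneg_left h2 (show (0:ℝ) ≤ 2*(n:ℝ) by positivity)
    have h4 : 2*(n:ℝ) * ((1/(2*(n:ℝ))) * (F - 2*E)) = F - 2*E := by field_simp
    rw [h4] at h3
    linarith
  -- noise bound
  have hswap : E = ∑ j : Σ k : Fin K, Fin (p k), D j * ∑ i, X i j * ε i := by
    rw [hE]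
    calc (∑ i, ε i * ∑ j : Σ k : Fin K, Fin (p k), X i j * D j)
        = ∑ i, ∑ j : Σ k : Fin K, Fin (p k), ε i * (X i j * D j) :=
          Finset.sum_congr rfl (fun i _ => Finset.mul_sum _ _ _)
      _ = ∑ j : Σ k : Fin K, Fin (p k), ∑ i, ε i * (X i j * D j) := Finset.sum_comm
      _ = ∑ j : Σ k : Fin K, Fin (p k), D j * ∑ i, X i j * ε i := by
          refine Finset.sum_congr rfl (fun j _ => ?_)
          rw [Finset.mul_sum]
          exact Finset.sum_congr rfl (fun i _ => by ring)
  have hnoise' : ∀ j : Σ k : Fin K, Fin (p k),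
      |∑ i, X i j * ε i| ≤ (n:ℝ) * (lam * α) / 2 := by
    intro j
    have h := mul_le_mul_of_nonneg_left (hnoise j) (show (0:ℝ) ≤ (n:ℝ)/2 by positivity)
    have he : ((n:ℝ)/2) * ((2/(n:ℝ)) * |∑ i, X i j * ε i|) = |∑ i, X i j * ε i| := by
      field_simp
    rw [he] at h
    linarith
  have hEbound : E ≤ ((n:ℝ) * (lam * α) / 2) * ∑ j : Σ k : Fin K, Fin (p k), |D j| := by
    rw [hswap]
    calc (∑ j : Σ k : Fin K, Fin (p k), D j * ∑ i, X i j * ε i)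
        ≤ ∑ j : Σ k : Fin K, Fin (p k), |D j| * ((n:ℝ) * (lam * α) / 2) := by
          refine Finset.sum_le_sum (fun j _ => ?_)
          calc D j * ∑ i, X i j * ε i ≤ |D j * ∑ i, X i j * ε i| := le_abs_self _
            _ = |D j| * |∑ i, X i j * ε i| := abs_mul _ _
            _ ≤ |D j| * ((n:ℝ) * (lam * α) / 2) :=
                mul_le_mul_of_nonneg_left (hnoise' j) (abs_nonneg _)
      _ = ((n:ℝ) * (lam * α) / 2) * ∑ j : Σ k : Fin K, Fin (p k), |D j| := by
          rw [Finset.mul_sum]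
          exact Finset.sum_congr rfl (fun j _ => by ring)
  -- penalty bound, termwise
  have hpG : ∀ k : Fin K,
      (p k : ℝ) * (Real.log (∑ j : Fin (p k), Real.exp (α * |βstar ⟨k, j⟩|))
        - Real.log (∑ j : Fin (p k), Real.exp (α * |βh ⟨k, j⟩|)))
      ≤ α * (p k : ℝ) * ∑ j : Fin (p k), |D ⟨k, j⟩| := by
    intro k
    have hne : Nonempty (Fin (p k)) := Fin.pos_iff_nonempty.mp (hp k)
    have hSh : 0 < ∑ j : Fin (p k), Real.exp (α * |βh ⟨k, j⟩|) :=
      Finset.sum_pos (fun j _ => Real.exp_pos _) Finset.univ_nonempty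
    have hSs : 0 < ∑ j : Fin (p k), Real.exp (α * |βstar ⟨k, j⟩|) :=
      Finset.sum_pos (fun j _ => Real.exp_pos _) Finset.univ_nonempty
    have hje : ∀ j0 : Fin (p k), |D ⟨k, j0⟩| ≤ ∑ j : Fin (p k), |D ⟨k, j⟩| :=
      fun j0 => Finset.single_le_sum (f := fun j : Fin (p k) => |D ⟨k, j⟩|)
        (fun j _ => abs_nonneg _) (Finset.mem_univ j0)
    have hle : (∑ j : Fin (p k), Real.exp (α * |βstar ⟨k, j⟩|))
        ≤ Real.exp (α * ∑ j : Fin (p k), |D ⟨k, j⟩|)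
          * ∑ j : Fin (p k), Real.exp (α * |βh ⟨k, j⟩|) := by
      rw [Finset.mul_sum]
      refine Finset.sum_le_sum (fun j _ => ?_)
      rw [← Real.exp_add]
      apply Real.exp_le_exp.mpr
      have habs : |βstar ⟨k, j⟩| ≤ |βh ⟨k, j⟩| + |D ⟨k, j⟩| := by
        have hbs : βstar ⟨k, j⟩ = βh ⟨k, j⟩ - D ⟨k, j⟩ := by rw [hDj]; ring
        rw [hbs]
        exact abs_sub _ _
      have h9 : |βstar ⟨k, j⟩| ≤ ∑ j' : Fin (p k), |D ⟨k, j'⟩| + |βh ⟨k, j⟩| := by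
        linarith [hje j]
      nlinarith [mul_le_mul_of_nonneg_left h9 hα.le]
    have hlog : Real.log (∑ j : Fin (p k), Real.exp (α * |βstar ⟨k, j⟩|))
        ≤ α * (∑ j : Fin (p k), |D ⟨k, j⟩|)
          + Real.log (∑ j : Fin (p k), Real.exp (α * |βh ⟨k, j⟩|)) := by
      calc Real.log (∑ j : Fin (p k), Real.exp (α * |βstar ⟨k, j⟩|))
          ≤ Real.log (Real.exp (α * ∑ j : Fin (p k), |D ⟨k, j⟩|)
              * ∑ j : Fin (p k), Real.exp (α * |βh ⟨k, j⟩|)) := Real.log_le_log hSs hle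
        _ = α * (∑ j : Fin (p k), |D ⟨k, j⟩|)
              + Real.log (∑ j : Fin (p k), Real.exp (α * |βh ⟨k, j⟩|)) := by
            rw [Real.log_mul (Real.exp_ne_zero _) (ne_of_gt hSh), Real.log_exp]
    have hpk0 : (0:ℝ) ≤ (p k : ℝ) := Nat.cast_nonneg _
    have h11 := mul_le_mul_of_nonneg_left
      (show Real.log (∑ j : Fin (p k), Real.exp (α * |βstar ⟨k, j⟩|))
          - Real.log (∑ j : Fin (p k), Real.exp (α * |βh ⟨k, j⟩|))
          ≤ α * ∑ j : Fin (p k), |D ⟨k, j⟩| by linarith only [hlog]) hpk0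
    nlinarith only [h11]
  have hpC : ∀ k ∉ G,
      (p k : ℝ) * (Real.log (∑ j : Fin (p k), Real.exp (α * |βstar ⟨k, j⟩|))
        - Real.log (∑ j : Fin (p k), Real.exp (α * |βh ⟨k, j⟩|)))
      ≤ -(α * ∑ j : Fin (p k), |D ⟨k, j⟩|) := by
    intro k hk
    have hz : ∀ j : Fin (p k), βstar ⟨k, j⟩ = 0 := by
      have h : ¬ ∃ j : Fin (p k), βstar ⟨k, j⟩ ≠ 0 := fun hex => hk ((hG k).mpr hex)
      push_neg at h
      exact h
    have hne : Nonempty (Fin (p k)) := Fin.pos_iff_nonempty.mp (hp k)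
    have hSh : 0 < ∑ j : Fin (p k), Real.exp (α * |βh ⟨k, j⟩|) :=
      Finset.sum_pos (fun j _ => Real.exp_pos _) Finset.univ_nonempty
    have hp0 : (0:ℝ) < (p k : ℝ) := by exact_mod_cast hp k
    have hSs : (∑ j : Fin (p k), Real.exp (α * |βstar ⟨k, j⟩|)) = (p k : ℝ) := by
      simp [hz]
    have hge := sum_exp_ge_card_mul_exp_avg (hp k) (fun j : Fin (p k) => α * |βh ⟨k, j⟩|)
    have hlog : Real.log (p k : ℝ) + (∑ j : Fin (p k), α * |βh ⟨k, j⟩|) / (p k : ℝ)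
        ≤ Real.log (∑ j : Fin (p k), Real.exp (α * |βh ⟨k, j⟩|)) := by
      have h10 := Real.log_le_log (by positivity) hge
      rwa [Real.log_mul (ne_of_gt hp0) (Real.exp_ne_zero _), Real.log_exp] at h10
    have hsum' : (∑ j : Fin (p k), α * |βh ⟨k, j⟩|) = α * ∑ j : Fin (p k), |D ⟨k, j⟩| := by
      rw [Finset.mul_sum]
      refine Finset.sum_congr rfl (fun j _ => ?_)
      rw [hDj ⟨k, j⟩, hz j]
      ring_nf
    rw [hsum'] at hlog
    rw [hSs]
    have hfin : (p k : ℝ) * ((α * ∑ j : Fin (p k), |D ⟨k, j⟩|) / (p k : ℝ))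
        = α * ∑ j : Fin (p k), |D ⟨k, j⟩| := by field_simp
    have h11 := mul_le_mul_of_nonneg_left
      (show Real.log (p k : ℝ) - Real.log (∑ j : Fin (p k), Real.exp (α * |βh ⟨k, j⟩|))
          ≤ -((α * ∑ j : Fin (p k), |D ⟨k, j⟩|) / (p k : ℝ)) by linarith only [hlog]) hp0.le
    have h12 : (p k : ℝ) * (-((α * ∑ j : Fin (p k), |D ⟨k, j⟩|) / (p k : ℝ)))
        = -(α * ∑ j : Fin (p k), |D ⟨k, j⟩|) := by
      rw [mul_neg, hfin]
    linarith only [h11, h12]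
  -- sum the penalty bounds
  have hpen : Pstar - Phat ≤ α * ((∑ k ∈ G, (p k : ℝ) * ∑ j : Fin (p k), |D ⟨k, j⟩|)
      - ∑ k ∈ Gᶜ, ∑ j : Fin (p k), |D ⟨k, j⟩|) := by
    have hdiff : Pstar - Phat = ∑ k : Fin K, (p k : ℝ) *
        (Real.log (∑ j : Fin (p k), Real.exp (α * |βstar ⟨k, j⟩|))
          - Real.log (∑ j : Fin (p k), Real.exp (α * |βh ⟨k, j⟩|))) := by
      rw [hPs, hPh, ← Finset.sum_sub_distrib]
      exact Finset.sum_congr rfl (fun k _ => by ring)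
    have hsplitk := (Finset.sum_add_sum_compl G (fun k : Fin K => (p k : ℝ) *
        (Real.log (∑ j : Fin (p k), Real.exp (α * |βstar ⟨k, j⟩|))
          - Real.log (∑ j : Fin (p k), Real.exp (α * |βh ⟨k, j⟩|))))).symm
    have hbG : (∑ k ∈ G, (p k : ℝ) *
        (Real.log (∑ j : Fin (p k), Real.exp (α * |βstar ⟨k, j⟩|))
          - Real.log (∑ j : Fin (p k), Real.exp (α * |βh ⟨k, j⟩|))))
        ≤ ∑ k ∈ G, α * ((p k : ℝ) * ∑ j : Fin (p k), |D ⟨k, j⟩|) :=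
      Finset.sum_le_sum (fun k _ => by have := hpG k; linarith only [this])
    have hbC : (∑ k ∈ Gᶜ, (p k : ℝ) *
        (Real.log (∑ j : Fin (p k), Real.exp (α * |βstar ⟨k, j⟩|))
          - Real.log (∑ j : Fin (p k), Real.exp (α * |βh ⟨k, j⟩|))))
        ≤ ∑ k ∈ Gᶜ, -(α * ∑ j : Fin (p k), |D ⟨k, j⟩|) :=
      Finset.sum_le_sum (fun k hk => hpC k (Finset.mem_compl.mp hk))
    have e3 : (∑ k ∈ G, α * ((p k : ℝ) * ∑ j : Fin (p k), |D ⟨k, j⟩|))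
        = α * ∑ k ∈ G, (p k : ℝ) * ∑ j : Fin (p k), |D ⟨k, j⟩| :=
      (Finset.mul_sum _ _ _).symm
    have e4 : (∑ k ∈ Gᶜ, -(α * ∑ j : Fin (p k), |D ⟨k, j⟩|))
        = -(α * ∑ k ∈ Gᶜ, ∑ j : Fin (p k), |D ⟨k, j⟩|) := by
      rw [Finset.mul_sum, ← Finset.sum_neg_distrib]
    rw [hdiff, hsplitk]
    rw [e3] at hbG
    rw [e4] at hbC
    linarith only [hbG, hbC]
  -- the basic inequality, in group form
  have hsig : (∑ j : Σ k : Fin K, Fin (p k), |D j|)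
      = ∑ k : Fin K, ∑ j : Fin (p k), |D ⟨k, j⟩| := by
    rw [← Finset.univ_sigma_univ, Finset.sum_sigma]
  have hbasic : F ≤ (n:ℝ) * (lam * α) *
      ((∑ k ∈ G, (1 + 2 * (p k : ℝ)) * ∑ j : Fin (p k), |D ⟨k, j⟩|)
        - ∑ k ∈ Gᶜ, ∑ j : Fin (p k), |D ⟨k, j⟩|) := by
    have hE2 : E ≤ ((n:ℝ) * (lam * α) / 2) *
        ((∑ k ∈ G, ∑ j : Fin (p k), |D ⟨k, j⟩|) + ∑ k ∈ Gᶜ, ∑ j : Fin (p k), |D ⟨k, j⟩|) := by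
      rw [hsig, ← Finset.sum_add_sum_compl G (fun k : Fin K => ∑ j : Fin (p k), |D ⟨k, j⟩|)]
        at hEbound
      exact hEbound
    have hpen' := mul_le_mul_of_nonneg_left hpen
      (show (0:ℝ) ≤ 2 * (n:ℝ) * lam by positivity)
    have hAex : (∑ k ∈ G, (1 + 2 * (p k : ℝ)) * ∑ j : Fin (p k), |D ⟨k, j⟩|)
        = (∑ k ∈ G, ∑ j : Fin (p k), |D ⟨k, j⟩|)
          + 2 * ∑ k ∈ G, (p k : ℝ) * ∑ j : Fin (p k), |D ⟨k, j⟩| := by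
      rw [Finset.mul_sum, ← Finset.sum_add_distrib]
      exact Finset.sum_congr rfl (fun k _ => by ring)
    have hbig : (n:ℝ) * (lam * α) *
        ((∑ k ∈ G, (1 + 2 * (p k : ℝ)) * ∑ j : Fin (p k), |D ⟨k, j⟩|)
          - ∑ k ∈ Gᶜ, ∑ j : Fin (p k), |D ⟨k, j⟩|)
        = (n:ℝ) * (lam * α) * (∑ k ∈ G, ∑ j : Fin (p k), |D ⟨k, j⟩|)
          + 2 * ((n:ℝ) * (lam * α)) * (∑ k ∈ G, (p k : ℝ) * ∑ j : Fin (p k), |D ⟨k, j⟩|)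
          - (n:ℝ) * (lam * α) * (∑ k ∈ Gᶜ, ∑ j : Fin (p k), |D ⟨k, j⟩|) := by
      rw [hAex]; ring
    linarith only [hstep3, hE2, hpen', hbig]
  -- RE condition, squared
  have hF0 : 0 ≤ F := hF ▸ Finset.sum_nonneg (fun i _ => sq_nonneg _)
  have hRE2 : (∑ k ∈ Gᶜ, ∑ j : Fin (p k), |D ⟨k, j⟩|)
      ≤ (∑ k ∈ G, (1 + 2 * (p k : ℝ)) * ∑ j : Fin (p k), |D ⟨k, j⟩|) →
      κ ^ 2 * ((n:ℝ) * ∑ k ∈ G, (p k : ℝ) * (1 + (p k : ℝ)) ^ 2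
        * ∑ j : Fin (p k), (D ⟨k, j⟩) ^ 2) ≤ 4 * F := by
    intro hcone
    have h := hRE G (le_of_eq hs.symm) D hΔ0 hcone
    rw [← hF] at h
    have hS'0 : 0 ≤ ∑ k ∈ G, (p k : ℝ) * (1 + (p k : ℝ)) ^ 2
        * ∑ j : Fin (p k), (D ⟨k, j⟩) ^ 2 :=
      Finset.sum_nonneg (fun k _ => by positivity)
    have hsqle := mul_self_le_mul_self (by positivity) h
    have e5 : (κ * Real.sqrt (n:ℝ) * Real.sqrt (∑ k ∈ G, (p k : ℝ) * (1 + (p k : ℝ)) ^ 2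
          * ∑ j : Fin (p k), (D ⟨k, j⟩) ^ 2))
        * (κ * Real.sqrt (n:ℝ) * Real.sqrt (∑ k ∈ G, (p k : ℝ) * (1 + (p k : ℝ)) ^ 2
          * ∑ j : Fin (p k), (D ⟨k, j⟩) ^ 2))
        = κ ^ 2 * ((n:ℝ) * ∑ k ∈ G, (p k : ℝ) * (1 + (p k : ℝ)) ^ 2
          * ∑ j : Fin (p k), (D ⟨k, j⟩) ^ 2) := by
      have e51 := Real.mul_self_sqrt (le_of_lt hn')
      have e52 := Real.mul_self_sqrt hS'0
      calc _ = κ ^ 2 * ((Real.sqrt (n:ℝ) * Real.sqrt (n:ℝ))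
            * (Real.sqrt (∑ k ∈ G, (p k : ℝ) * (1 + (p k : ℝ)) ^ 2
              * ∑ j : Fin (p k), (D ⟨k, j⟩) ^ 2)
              * Real.sqrt (∑ k ∈ G, (p k : ℝ) * (1 + (p k : ℝ)) ^ 2
              * ∑ j : Fin (p k), (D ⟨k, j⟩) ^ 2))) := by ring
        _ = _ := by rw [e51, e52]
    have e6 : (2 * Real.sqrt F) * (2 * Real.sqrt F) = 4 * F := by
      have := Real.mul_self_sqrt hF0
      calc (2 * Real.sqrt F) * (2 * Real.sqrt F) = 4 * (Real.sqrt F * Real.sqrt F) := by ring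
        _ = 4 * F := by rw [this]
    linarith only [hsqle, e5, e6]
  -- Cauchy-Schwarz within groups
  have hcsk : ∀ k, (∑ j : Fin (p k), |D ⟨k, j⟩|) ^ 2
      ≤ (p k : ℝ) * ∑ j : Fin (p k), (D ⟨k, j⟩) ^ 2 := by
    intro k
    have h := Finset.sum_mul_sq_le_sq_mul_sq Finset.univ
      (fun _ : Fin (p k) => (1:ℝ)) (fun j => |D ⟨k, j⟩|)
    simpa [sq_abs, Finset.card_univ] using h
  -- conclude via les_aux
  have key := les_aux K s (fun k => (p k : ℝ)) (fun k => show (1:ℝ) ≤ (p k : ℝ) by exact_mod_cast hp k)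
    G hs lam α κ (n:ℝ) F hlam hα hκ hn' hF0
    (fun k => ∑ j : Fin (p k), |D ⟨k, j⟩|) (fun k => ∑ j : Fin (p k), (D ⟨k, j⟩) ^ 2)
    (fun k => Finset.sum_nonneg fun j _ => abs_nonneg _)
    (fun k => Finset.sum_nonneg fun j _ => sq_nonneg _)
    hcsk hbasic hRE2
  calc (∑ j : Σ k : Fin K, Fin (p k), |βh j - βstar j|)
      = ∑ k : Fin K, ∑ j : Fin (p k), |D ⟨k, j⟩| := by
        rw [← Finset.univ_sigma_univ, Finset.sum_sigma]
    _ ≤ 16 * (s:ℝ) * (lam * α) / κ ^ 2 := key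
end

section
/- Euclidean-loss bound (deterministic core of Theorem 1, inequality (19)): assume y = Xβ* + ε with (2/n)·max_{k,j} |X_{kj}^T ε| ≤ λα, let s = |G(β*)|, and assume the REgroup(κ, s) hypothesis holds. Then every minimizer β̂ of Q satisfies ‖β̂ − β*‖₂ ≤ (2√s + 1) · 8√s · λα / κ². -/
open Finset

set_option maxHeartbeats 1000000

/-- Lipschitz bound for log-sum-exp. -/
lemma lse_lip {m : ℕ} (hm : 0 < m) (a b : Fin m → ℝ) :
    Real.log (∑ j, Real.exp (a j)) - Real.log (∑ j, Real.exp (b j)) ≤ ∑ j, |a j - b j| := by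
  set M := ∑ j, |a j - b j| with hM
  have hpos : (0:ℝ) < ∑ j, Real.exp (b j) := by
    apply Finset.sum_pos (fun j _ => Real.exp_pos _)
    simpa [Finset.univ_nonempty_iff, ← Fin.pos_iff_nonempty]
  have hposA : (0:ℝ) < ∑ j, Real.exp (a j) := by
    apply Finset.sum_pos (fun j _ => Real.exp_pos _)
    simpa [Finset.univ_nonempty_iff, ← Fin.pos_iff_nonempty]
  have hle : ∑ j, Real.exp (a j) ≤ Real.exp M * ∑ j, Real.exp (b j) := by
    rw [Finset.mul_sum]
    apply Finset.sum_le_sum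
    intro j _
    rw [← Real.exp_add]
    apply Real.exp_le_exp.2
    have h1 : a j - b j ≤ M := by
      calc a j - b j ≤ |a j - b j| := le_abs_self _
        _ ≤ M := Finset.single_le_sum (f := fun j => |a j - b j|) (fun j _ => abs_nonneg _)
              (mem_univ j)
    linarith
  have key : Real.log (∑ j, Real.exp (a j)) ≤ M + Real.log (∑ j, Real.exp (b j)) := by
    calc Real.log (∑ j, Real.exp (a j)) ≤ Real.log (Real.exp M * ∑ j, Real.exp (b j)) :=
          Real.log_le_log hposA hle
      _ = M + Real.log (∑ j, Real.exp (b j)) := by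
          rw [Real.log_mul (Real.exp_ne_zero _) (ne_of_gt hpos), Real.log_exp]
  linarith

/-- Jensen lower bound for log-sum-exp. -/
lemma lse_jensen {m : ℕ} (hm : 0 < m) (x : Fin m → ℝ) :
    Real.log m + (∑ j, x j) / m ≤ Real.log (∑ j, Real.exp (x j)) := by
  set A := (∑ j, x j) / m with hA
  have hsum : (m:ℝ) * Real.exp A ≤ ∑ j, Real.exp (x j) := by
    have : ∀ j : Fin m, Real.exp A * (x j - A + 1) ≤ Real.exp (x j) := by
      intro j
      have := Real.add_one_le_exp (x j - A)
      calc Real.exp A * (x j - A + 1) ≤ Real.exp A * Real.exp (x j - A) := by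
            apply mul_le_mul_of_nonneg_left this (Real.exp_nonneg _)
        _ = Real.exp (x j) := by rw [← Real.exp_add]; ring_nf
    calc (m:ℝ) * Real.exp A = ∑ j : Fin m, Real.exp A * (x j - A + 1) := by
          rw [← Finset.mul_sum]
          have : ∑ j : Fin m, (x j - A + 1) = (m:ℝ) := by
            rw [Finset.sum_add_distrib, Finset.sum_sub_distrib]
            simp [hA]
            field_simp; ring
          rw [this]; ring
      _ ≤ ∑ j, Real.exp (x j) := Finset.sum_le_sum fun j _ => this j
  have h1 : Real.log ((m:ℝ) * Real.exp A) ≤ Real.log (∑ j, Real.exp (x j)) :=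
    Real.log_le_log (by positivity) hsum
  rwa [Real.log_mul (by positivity) (Real.exp_ne_zero _), Real.log_exp] at h1

/-- **Euclidean-loss bound** (deterministic core of Theorem 1, inequality (19)).
Assume `y = X β* + ε` with `(2/n) max_{k,j} |X kjᵀ ε| ≤ λ α`, let
`s = |G(β*)|`, and assume the REgroup(κ, s) hypothesis.  Then every minimizer
`β̂` of `Q` (with weights `w k = p k`) satisfies
`‖β̂ - β*‖₂ ≤ (2√s + 1) * 8√s * λ α / κ²`. -/
theorem les_l2_bound (n K : ℕ) (hn : 0 < n) (hK : 0 < K)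
    (p : Fin K → ℕ) (hp : ∀ k, 1 ≤ p k)
    (X : Fin n → (Σ k : Fin K, Fin (p k)) → ℝ)
    (βstar : (Σ k : Fin K, Fin (p k)) → ℝ) (ε y : Fin n → ℝ)
    (hmodel : ∀ i, y i = (∑ j : Σ k : Fin K, Fin (p k), X i j * βstar j) + ε i)
    (lam α : ℝ) (hlam : 0 < lam) (hα : 0 < α)
    (hnoise : ∀ j : Σ k : Fin K, Fin (p k),
      (2 / (n : ℝ)) * |∑ i : Fin n, X i j * ε i| ≤ lam * α)
    (G : Finset (Fin K)) (hG : ∀ k, k ∈ G ↔ ∃ j : Fin (p k), βstar ⟨k, j⟩ ≠ 0)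
    (s : ℕ) (hs : s = G.card)
    (κ : ℝ) (hκ : 0 < κ)
    (hRE : ∀ G' : Finset (Fin K), G'.card ≤ s →
      ∀ Δ : (Σ k : Fin K, Fin (p k)) → ℝ, Δ ≠ 0 →
      (∑ k ∈ G'ᶜ, ∑ j : Fin (p k), |Δ ⟨k, j⟩|) ≤
        (∑ k ∈ G', (1 + 2 * (p k : ℝ)) * ∑ j : Fin (p k), |Δ ⟨k, j⟩|) →
      κ * Real.sqrt (n : ℝ) *
          Real.sqrt (∑ k ∈ G', (p k : ℝ) * (1 + (p k : ℝ)) ^ 2 * ∑ j : Fin (p k), (Δ ⟨k, j⟩) ^ 2) ≤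
        2 * Real.sqrt (∑ i : Fin n, (∑ j : Σ k : Fin K, Fin (p k), X i j * Δ j) ^ 2))
    (βh : (Σ k : Fin K, Fin (p k)) → ℝ)
    (hmin : IsMinOn
      (fun β : (Σ k : Fin K, Fin (p k)) → ℝ =>
        (1 / (2 * (n : ℝ))) * ∑ i : Fin n, (y i - ∑ j : Σ k : Fin K, Fin (p k), X i j * β j) ^ 2
          + lam * ∑ k : Fin K, (p k : ℝ) * Real.log (∑ j : Fin (p k), Real.exp (α * |β ⟨k, j⟩|)))
      Set.univ βh) :
    Real.sqrt (∑ j : Σ k : Fin K, Fin (p k), (βh j - βstar j) ^ 2) ≤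
      (2 * Real.sqrt (s : ℝ) + 1) * (8 * Real.sqrt (s : ℝ) * (lam * α)) / κ ^ 2 := by
  have hnR : (0:ℝ) < n := by exact_mod_cast hn
  set Δ : (Σ k : Fin K, Fin (p k)) → ℝ := fun j => βh j - βstar j with hΔdef
  set L1 : Fin K → ℝ := fun k => ∑ j : Fin (p k), |Δ ⟨k, j⟩| with hL1def
  set L2 : Fin K → ℝ := fun k => ∑ j : Fin (p k), (Δ ⟨k, j⟩) ^ 2 with hL2def
  set XΔ : Fin n → ℝ := fun i => ∑ j : Σ k : Fin K, Fin (p k), X i j * Δ j with hXΔdef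
  set QQ : ℝ := ∑ i : Fin n, (XΔ i) ^ 2 with hQQdef
  set S : ℝ := ∑ i : Fin n, ε i * XΔ i with hSdef
  set T2 : ℝ := ∑ k ∈ G, (p k : ℝ) * (1 + (p k : ℝ)) ^ 2 * L2 k with hT2def
  set T : ℝ := Real.sqrt T2 with hTdef
  have hL1nn : ∀ k, 0 ≤ L1 k := fun k => Finset.sum_nonneg fun j _ => abs_nonneg _
  have hL2nn : ∀ k, 0 ≤ L2 k := fun k => Finset.sum_nonneg fun j _ => sq_nonneg _
  have hT2nn : 0 ≤ T2 := Finset.sum_nonneg fun k _ => by positivity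
  have hQQnn : 0 ≤ QQ := Finset.sum_nonneg fun i _ => sq_nonneg _
  have hTnn : 0 ≤ T := Real.sqrt_nonneg _
  have hsnn : (0:ℝ) ≤ s := Nat.cast_nonneg _
  have hpR : ∀ k, (1:ℝ) ≤ (p k : ℝ) := fun k => by exact_mod_cast hp k
  -- sigma-sum splitting
  have hsig : ∀ f : (Σ k : Fin K, Fin (p k)) → ℝ,
      (∑ j : Σ k : Fin K, Fin (p k), f j) = ∑ k : Fin K, ∑ j : Fin (p k), f ⟨k, j⟩ := by
    intro f
    rw [← Finset.univ_sigma_univ, Finset.sum_sigma]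
  -- Step 1: basic inequality
  have hbasic : (1/(2*(n:ℝ))) * QQ ≤ 2 * ((1/(2*(n:ℝ))) * S) +
      lam * ((∑ k : Fin K, (p k : ℝ) * Real.log (∑ j : Fin (p k), Real.exp (α * |βstar ⟨k, j⟩|)))
        - ∑ k : Fin K, (p k : ℝ) * Real.log (∑ j : Fin (p k), Real.exp (α * |βh ⟨k, j⟩|))) := by
    have hk := isMinOn_iff.mp hmin βstar (Set.mem_univ _)
    have hys : ∀ i, y i - ∑ j : Σ k : Fin K, Fin (p k), X i j * βstar j = ε i := by
      intro i; rw [hmodel i]; ring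
    have hyh : ∀ i, y i - ∑ j : Σ k : Fin K, Fin (p k), X i j * βh j = ε i - XΔ i := by
      intro i
      have hXi : XΔ i = (∑ j : Σ k : Fin K, Fin (p k), X i j * βh j)
          - ∑ j : Σ k : Fin K, Fin (p k), X i j * βstar j := by
        show (∑ j : Σ k : Fin K, Fin (p k), X i j * Δ j) = _
        rw [← Finset.sum_sub_distrib]
        exact Finset.sum_congr rfl fun j _ => by show X i j * (βh j - βstar j) = _; ring
      rw [hmodel i, hXi]; ring
    have hEs : ∑ i : Fin n, (y i - ∑ j : Σ k : Fin K, Fin (p k), X i j * βstar j) ^ 2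
        = ∑ i : Fin n, (ε i) ^ 2 :=
      Finset.sum_congr rfl fun i _ => by rw [hys i]
    have hEh : ∑ i : Fin n, (y i - ∑ j : Σ k : Fin K, Fin (p k), X i j * βh j) ^ 2
        = ∑ i : Fin n, (ε i) ^ 2 - 2 * S + QQ := by
      have h1 : ∀ i : Fin n, (y i - ∑ j : Σ k : Fin K, Fin (p k), X i j * βh j) ^ 2
          = (ε i) ^ 2 - 2 * (ε i * XΔ i) + (XΔ i) ^ 2 := fun i => by rw [hyh i]; ring
      rw [Finset.sum_congr rfl (fun i _ => h1 i), Finset.sum_add_distrib,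
        Finset.sum_sub_distrib, ← Finset.mul_sum]
    rw [hEs, hEh] at hk
    have e1 : (1/(2*(n:ℝ))) * ((∑ i : Fin n, (ε i) ^ 2) - 2 * S + QQ)
        = (1/(2*(n:ℝ))) * (∑ i : Fin n, (ε i) ^ 2) - 2 * ((1/(2*(n:ℝ))) * S)
          + (1/(2*(n:ℝ))) * QQ := by ring
    have e2 : lam * ((∑ k : Fin K, (p k : ℝ) *
          Real.log (∑ j : Fin (p k), Real.exp (α * |βstar ⟨k, j⟩|)))
        - ∑ k : Fin K, (p k : ℝ) * Real.log (∑ j : Fin (p k), Real.exp (α * |βh ⟨k, j⟩|)))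
        = lam * (∑ k : Fin K, (p k : ℝ) *
            Real.log (∑ j : Fin (p k), Real.exp (α * |βstar ⟨k, j⟩|)))
          - lam * ∑ k : Fin K, (p k : ℝ) *
            Real.log (∑ j : Fin (p k), Real.exp (α * |βh ⟨k, j⟩|)) := by ring
    linarith [hk, e1, e2]
  -- Step 2: noise bound
  have hS : S ≤ ((n:ℝ) * (lam * α) / 2) * ∑ k : Fin K, L1 k := by
    have hswap : S = ∑ j : Σ k : Fin K, Fin (p k), (∑ i : Fin n, X i j * ε i) * Δ j := by
      show (∑ i : Fin n, ε i * XΔ i) = _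
      calc ∑ i : Fin n, ε i * XΔ i
          = ∑ i : Fin n, ∑ j : Σ k : Fin K, Fin (p k), ε i * (X i j * Δ j) := by
            exact Finset.sum_congr rfl fun i _ => Finset.mul_sum _ _ _
        _ = ∑ j : Σ k : Fin K, Fin (p k), ∑ i : Fin n, ε i * (X i j * Δ j) := Finset.sum_comm
        _ = ∑ j : Σ k : Fin K, Fin (p k), (∑ i : Fin n, X i j * ε i) * Δ j := by
            apply Finset.sum_congr rfl; intro j _
            rw [Finset.sum_mul]
            exact Finset.sum_congr rfl fun i _ => by ring
    have hcb : ∀ j : Σ k : Fin K, Fin (p k),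
        |∑ i : Fin n, X i j * ε i| ≤ (n:ℝ) * (lam * α) / 2 := by
      intro j
      have h := mul_le_mul_of_nonneg_right (hnoise j)
        (le_of_lt (by positivity : (0:ℝ) < (n:ℝ)/2))
      have e : 2 / (n:ℝ) * |∑ i : Fin n, X i j * ε i| * ((n:ℝ)/2)
          = |∑ i : Fin n, X i j * ε i| := by field_simp
      rw [e] at h
      have e2 : lam * α * ((n:ℝ)/2) = (n:ℝ) * (lam * α) / 2 := by ring
      linarith [h, e2.le]
    calc S = ∑ j : Σ k : Fin K, Fin (p k), (∑ i : Fin n, X i j * ε i) * Δ j := hswap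
      _ ≤ ∑ j : Σ k : Fin K, Fin (p k), |(∑ i : Fin n, X i j * ε i) * Δ j| :=
          Finset.sum_le_sum fun j _ => le_abs_self _
      _ = ∑ j : Σ k : Fin K, Fin (p k), |∑ i : Fin n, X i j * ε i| * |Δ j| := by
          exact Finset.sum_congr rfl fun j _ => abs_mul _ _
      _ ≤ ∑ j : Σ k : Fin K, Fin (p k), ((n:ℝ) * (lam * α) / 2) * |Δ j| :=
          Finset.sum_le_sum fun j _ => mul_le_mul_of_nonneg_right (hcb j) (abs_nonneg _)
      _ = ((n:ℝ) * (lam * α) / 2) * ∑ j : Σ k : Fin K, Fin (p k), |Δ j| := by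
          rw [← Finset.mul_sum]
      _ = ((n:ℝ) * (lam * α) / 2) * ∑ k : Fin K, L1 k := by
          rw [hsig (fun j => |Δ j|)]
  -- Step 3: penalty bound
  have hPen : (∑ k : Fin K, (p k : ℝ) * Real.log (∑ j : Fin (p k), Real.exp (α * |βstar ⟨k, j⟩|)))
        - ∑ k : Fin K, (p k : ℝ) * Real.log (∑ j : Fin (p k), Real.exp (α * |βh ⟨k, j⟩|))
      ≤ α * ∑ k ∈ G, (p k : ℝ) * L1 k - α * ∑ k ∈ Gᶜ, L1 k := by
    set A : Fin K → ℝ := fun k => Real.log (∑ j : Fin (p k), Real.exp (α * |βstar ⟨k, j⟩|))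
      with hAdef
    set B : Fin K → ℝ := fun k => Real.log (∑ j : Fin (p k), Real.exp (α * |βh ⟨k, j⟩|))
      with hBdef
    have hdiff : (∑ k : Fin K, (p k : ℝ) * A k) - ∑ k : Fin K, (p k : ℝ) * B k
        = ∑ k : Fin K, (p k : ℝ) * (A k - B k) := by
      rw [← Finset.sum_sub_distrib]
      exact Finset.sum_congr rfl fun k _ => by ring
    have hGle : ∀ k ∈ G, (p k : ℝ) * (A k - B k) ≤ α * ((p k : ℝ) * L1 k) := by
      intro k _
      have hlip := lse_lip (hp k) (fun j => α * |βstar ⟨k, j⟩|) (fun j => α * |βh ⟨k, j⟩|)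
      have hterm : ∀ j : Fin (p k),
          abs (α * |βstar ⟨k, j⟩| - α * |βh ⟨k, j⟩|) ≤ α * |Δ ⟨k, j⟩| := by
        intro j
        calc abs (α * |βstar ⟨k, j⟩| - α * |βh ⟨k, j⟩|)
            = α * abs (|βstar ⟨k, j⟩| - |βh ⟨k, j⟩|) := by
              rw [← mul_sub, abs_mul, abs_of_pos hα]
          _ ≤ α * |βstar ⟨k, j⟩ - βh ⟨k, j⟩| :=
              mul_le_mul_of_nonneg_left (abs_abs_sub_abs_le_abs_sub _ _) hα.le
          _ = α * |Δ ⟨k, j⟩| := by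
              show _ = α * |βh ⟨k, j⟩ - βstar ⟨k, j⟩|
              rw [abs_sub_comm]
      have hAB : A k - B k ≤ α * L1 k := by
        calc A k - B k ≤ ∑ j : Fin (p k), abs (α * |βstar ⟨k, j⟩| - α * |βh ⟨k, j⟩|) := hlip
          _ ≤ ∑ j : Fin (p k), α * |Δ ⟨k, j⟩| := Finset.sum_le_sum fun j _ => hterm j
          _ = α * L1 k := by rw [← Finset.mul_sum]
      calc (p k : ℝ) * (A k - B k) ≤ (p k : ℝ) * (α * L1 k) :=
            mul_le_mul_of_nonneg_left hAB (by positivity)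
        _ = α * ((p k : ℝ) * L1 k) := by ring
    have hGcle : ∀ k ∈ Gᶜ, (p k : ℝ) * (A k - B k) ≤ -(α * L1 k) := by
      intro k hk
      have hknG : k ∉ G := Finset.mem_compl.mp hk
      have hzero : ∀ j : Fin (p k), βstar ⟨k, j⟩ = 0 := by
        intro j
        by_contra hne
        exact hknG ((hG k).mpr ⟨j, hne⟩)
      have hpk0 : (0:ℝ) < (p k : ℝ) := by exact_mod_cast Nat.lt_of_lt_of_le Nat.zero_lt_one (hp k)
      have hAk : A k = Real.log (p k : ℝ) := by
        show Real.log (∑ j : Fin (p k), Real.exp (α * |βstar ⟨k, j⟩|)) = _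
        have : ∀ j : Fin (p k), Real.exp (α * |βstar ⟨k, j⟩|) = 1 := by
          intro j; rw [hzero j]; simp
        rw [Finset.sum_congr rfl fun j _ => this j]
        simp
      have hjen := lse_jensen (hp k) (fun j => α * |βh ⟨k, j⟩|)
      have hxsum : (∑ j : Fin (p k), α * |βh ⟨k, j⟩|) = α * L1 k := by
        rw [← Finset.mul_sum]
        congr 1
        apply Finset.sum_congr rfl
        intro j _
        show |βh ⟨k, j⟩| = |βh ⟨k, j⟩ - βstar ⟨k, j⟩|
        rw [hzero j, sub_zero]
      rw [hxsum] at hjen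
      have hAB : A k - B k ≤ -(α * L1 k) / (p k : ℝ) := by
        rw [hAk]
        have : Real.log (p k : ℝ) + α * L1 k / (p k : ℝ) ≤ B k := hjen
        have e : -(α * L1 k) / (p k : ℝ) = -(α * L1 k / (p k : ℝ)) := by ring
        linarith [e.le, e.ge]
      calc (p k : ℝ) * (A k - B k) ≤ (p k : ℝ) * (-(α * L1 k) / (p k : ℝ)) :=
            mul_le_mul_of_nonneg_left hAB hpk0.le
        _ = -(α * L1 k) := by field_simp
    calc (∑ k : Fin K, (p k : ℝ) * A k) - ∑ k : Fin K, (p k : ℝ) * B k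
        = ∑ k : Fin K, (p k : ℝ) * (A k - B k) := hdiff
      _ = (∑ k ∈ G, (p k : ℝ) * (A k - B k)) + ∑ k ∈ Gᶜ, (p k : ℝ) * (A k - B k) :=
          (Finset.sum_add_sum_compl G _).symm
      _ ≤ (∑ k ∈ G, α * ((p k : ℝ) * L1 k)) + ∑ k ∈ Gᶜ, -(α * L1 k) :=
          add_le_add (Finset.sum_le_sum hGle) (Finset.sum_le_sum hGcle)
      _ = α * ∑ k ∈ G, (p k : ℝ) * L1 k - α * ∑ k ∈ Gᶜ, L1 k := by
          rw [← Finset.mul_sum, Finset.sum_neg_distrib, ← Finset.mul_sum]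
          ring
  -- Step 4: master inequality
  have hmaster : (1/(2*(n:ℝ))) * QQ + (lam * α / 2) * ∑ k ∈ Gᶜ, L1 k
      ≤ lam * α * ∑ k ∈ G, (1/2 + (p k : ℝ)) * L1 k := by
    have hsplitL1 : ∑ k : Fin K, L1 k = ∑ k ∈ G, L1 k + ∑ k ∈ Gᶜ, L1 k :=
      (Finset.sum_add_sum_compl G L1).symm
    have hsplitG : ∑ k ∈ G, (1/2 + (p k : ℝ)) * L1 k
        = (1/2) * ∑ k ∈ G, L1 k + ∑ k ∈ G, (p k : ℝ) * L1 k := by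
      rw [Finset.mul_sum, ← Finset.sum_add_distrib]
      exact Finset.sum_congr rfl fun k _ => by ring
    have h2cS : 2 * ((1/(2*(n:ℝ))) * S) ≤ (lam * α / 2) * ∑ k : Fin K, L1 k := by
      have h1 : 2 * ((1/(2*(n:ℝ))) * S) = S / n := by field_simp
      have h2 : S / n ≤ ((n:ℝ) * (lam * α) / 2 * ∑ k : Fin K, L1 k) / n :=
        div_le_div_of_nonneg_right hS hnR.le
      have h3 : ((n:ℝ) * (lam * α) / 2 * ∑ k : Fin K, L1 k) / n
          = (lam * α / 2) * ∑ k : Fin K, L1 k := by field_simp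
      rw [h1]; rw [h3] at h2; exact h2
    have hlP : lam * ((∑ k : Fin K, (p k : ℝ) *
          Real.log (∑ j : Fin (p k), Real.exp (α * |βstar ⟨k, j⟩|)))
        - ∑ k : Fin K, (p k : ℝ) * Real.log (∑ j : Fin (p k), Real.exp (α * |βh ⟨k, j⟩|)))
        ≤ lam * (α * ∑ k ∈ G, (p k : ℝ) * L1 k - α * ∑ k ∈ Gᶜ, L1 k) :=
      mul_le_mul_of_nonneg_left hPen hlam.le
    have e1 : lam * (α * ∑ k ∈ G, (p k : ℝ) * L1 k - α * ∑ k ∈ Gᶜ, L1 k)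
        = lam * α * (∑ k ∈ G, (p k : ℝ) * L1 k) - lam * α * ∑ k ∈ Gᶜ, L1 k := by ring
    have e2 : (lam * α / 2) * (∑ k ∈ G, L1 k + ∑ k ∈ Gᶜ, L1 k)
        = (lam * α / 2) * ∑ k ∈ G, L1 k + (lam * α / 2) * ∑ k ∈ Gᶜ, L1 k := by ring
    have e3 : lam * α * ((1/2) * ∑ k ∈ G, L1 k + ∑ k ∈ G, (p k : ℝ) * L1 k)
        = (lam * α / 2) * ∑ k ∈ G, L1 k + lam * α * ∑ k ∈ G, (p k : ℝ) * L1 k := by ring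
    rw [hsplitL1] at h2cS
    rw [hsplitG, e3]
    linarith [hbasic, h2cS, hlP, e1.le, e1.ge, e2.le, e2.ge]
  -- Step 5: cone condition
  have hcone : ∑ k ∈ Gᶜ, L1 k ≤ ∑ k ∈ G, (1 + 2 * (p k : ℝ)) * L1 k := by
    have h1 : lam * α * ∑ k ∈ G, (1/2 + (p k : ℝ)) * L1 k
        = (lam * α / 2) * ∑ k ∈ G, (1 + 2 * (p k : ℝ)) * L1 k := by
      rw [Finset.mul_sum, Finset.mul_sum, ← Finset.sum_congr rfl]
      intro k _
      ring
    have h2 : 0 ≤ (1/(2*(n:ℝ))) * QQ := by positivity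
    have h3 : (lam * α / 2) * ∑ k ∈ Gᶜ, L1 k
        ≤ (lam * α / 2) * ∑ k ∈ G, (1 + 2 * (p k : ℝ)) * L1 k := by
      rw [← h1]; linarith [hmaster]
    exact (mul_le_mul_iff_right₀ (by positivity : (0:ℝ) < lam * α / 2)).mp h3
  -- ℓ1-ℓ2 per group
  have hL1L2 : ∀ k, L1 k ≤ Real.sqrt (p k : ℝ) * Real.sqrt (L2 k) := by
    intro k
    have h := sq_sum_le_card_mul_sum_sq (s := (univ : Finset (Fin (p k))))
      (f := fun j => |Δ ⟨k, j⟩|)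
    have hcard : ((univ : Finset (Fin (p k))).card : ℝ) = (p k : ℝ) := by simp
    have habs : ∑ j : Fin (p k), |Δ ⟨k, j⟩| ^ 2 = L2 k :=
      Finset.sum_congr rfl fun j _ => sq_abs _
    have h' : (L1 k) ^ 2 ≤ (p k : ℝ) * L2 k := by
      calc (L1 k) ^ 2 = (∑ j : Fin (p k), |Δ ⟨k, j⟩|) ^ 2 := rfl
        _ ≤ ((univ : Finset (Fin (p k))).card : ℝ) * ∑ j : Fin (p k), |Δ ⟨k, j⟩| ^ 2 := h
        _ = (p k : ℝ) * L2 k := by rw [hcard, habs]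
    calc L1 k = Real.sqrt ((L1 k) ^ 2) := (Real.sqrt_sq (hL1nn k)).symm
      _ ≤ Real.sqrt ((p k : ℝ) * L2 k) := Real.sqrt_le_sqrt h'
      _ = Real.sqrt (p k : ℝ) * Real.sqrt (L2 k) := Real.sqrt_mul (by positivity) _
  -- Cauchy-Schwarz over G
  have hCS : ∑ k ∈ G, (1 + (p k : ℝ)) * (Real.sqrt (p k : ℝ) * Real.sqrt (L2 k))
      ≤ Real.sqrt (s : ℝ) * T := by
    set a : Fin K → ℝ := fun k => (1 + (p k : ℝ)) * (Real.sqrt (p k : ℝ) * Real.sqrt (L2 k))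
      with hadef
    have hann : ∀ k, 0 ≤ a k := fun k => by positivity
    have ha2 : ∀ k, (a k) ^ 2 = (p k : ℝ) * (1 + (p k : ℝ)) ^ 2 * L2 k := by
      intro k
      have h1 : Real.sqrt (p k : ℝ) ^ 2 = (p k : ℝ) := Real.sq_sqrt (by positivity)
      have h2 : Real.sqrt (L2 k) ^ 2 = L2 k := Real.sq_sqrt (hL2nn k)
      calc (a k) ^ 2 = (1 + (p k : ℝ)) ^ 2 * (Real.sqrt (p k : ℝ) ^ 2 * Real.sqrt (L2 k) ^ 2) := by
            rw [hadef]; ring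
        _ = (p k : ℝ) * (1 + (p k : ℝ)) ^ 2 * L2 k := by rw [h1, h2]; ring
    have h := sq_sum_le_card_mul_sum_sq (s := G) (f := a)
    have hsum2 : ∑ k ∈ G, (a k) ^ 2 = T2 :=
      Finset.sum_congr rfl fun k _ => ha2 k
    have h' : (∑ k ∈ G, a k) ^ 2 ≤ (s : ℝ) * T2 := by
      calc (∑ k ∈ G, a k) ^ 2 ≤ (G.card : ℝ) * ∑ k ∈ G, (a k) ^ 2 := h
        _ = (s : ℝ) * T2 := by rw [hsum2, hs]
    calc ∑ k ∈ G, a k = Real.sqrt ((∑ k ∈ G, a k) ^ 2) :=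
          (Real.sqrt_sq (Finset.sum_nonneg fun k _ => hann k)).symm
      _ ≤ Real.sqrt ((s : ℝ) * T2) := Real.sqrt_le_sqrt h'
      _ = Real.sqrt (s : ℝ) * T := Real.sqrt_mul hsnn _
  by_cases hΔ0 : Δ = 0
  · have hz : (∑ j : Σ k : Fin K, Fin (p k), (βh j - βstar j) ^ 2) = 0 := by
      apply Finset.sum_eq_zero
      intro j _
      have : βh j - βstar j = 0 := congrFun hΔ0 j
      rw [this]; ring
    rw [hz, Real.sqrt_zero]
    positivity
  -- RE application
  have hRE2 : κ ^ 2 * (n : ℝ) * T2 ≤ 4 * QQ := by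
    have h := hRE G (le_of_eq hs.symm) Δ hΔ0 hcone
    have hT2' : (∑ k ∈ G, (p k : ℝ) * (1 + (p k : ℝ)) ^ 2 * ∑ j : Fin (p k), (Δ ⟨k, j⟩) ^ 2)
        = T2 := rfl
    have hQQ' : (∑ i : Fin n, (∑ j : Σ k : Fin K, Fin (p k), X i j * Δ j) ^ 2) = QQ := rfl
    rw [hT2', hQQ'] at h
    have hlhs : 0 ≤ κ * Real.sqrt (n : ℝ) * Real.sqrt T2 := by positivity
    have hsq := mul_self_le_mul_self hlhs h
    calc κ ^ 2 * (n : ℝ) * T2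
        = (κ * Real.sqrt (n : ℝ) * Real.sqrt T2) * (κ * Real.sqrt (n : ℝ) * Real.sqrt T2) := by
          rw [show (κ * Real.sqrt (n : ℝ) * Real.sqrt T2) * (κ * Real.sqrt (n : ℝ) * Real.sqrt T2)
            = κ ^ 2 * (Real.sqrt (n : ℝ) * Real.sqrt (n : ℝ))
              * (Real.sqrt T2 * Real.sqrt T2) from by ring,
            Real.mul_self_sqrt hnR.le, Real.mul_self_sqrt hT2nn]
      _ ≤ (2 * Real.sqrt QQ) * (2 * Real.sqrt QQ) := hsq
      _ = 4 * QQ := by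
          rw [show (2 * Real.sqrt QQ) * (2 * Real.sqrt QQ)
            = 4 * (Real.sqrt QQ * Real.sqrt QQ) from by ring, Real.mul_self_sqrt hQQnn]
  -- bound on T
  have hT : T ≤ 8 * Real.sqrt (s : ℝ) * (lam * α) / κ ^ 2 := by
    rcases eq_or_lt_of_le hTnn with hT0 | hTpos
    · rw [← hT0]; positivity
    have hTT : T ^ 2 = T2 := Real.sq_sqrt hT2nn
    have hB : ∑ k ∈ G, (1/2 + (p k : ℝ)) * L1 k ≤ Real.sqrt (s : ℝ) * T := by
      calc ∑ k ∈ G, (1/2 + (p k : ℝ)) * L1 k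
          ≤ ∑ k ∈ G, (1 + (p k : ℝ)) * (Real.sqrt (p k : ℝ) * Real.sqrt (L2 k)) := by
            apply Finset.sum_le_sum
            intro k _
            have h1 := hL1L2 k
            have h2 := hL1nn k
            have h3 : (0:ℝ) ≤ 1/2 + (p k : ℝ) := by positivity
            nlinarith
        _ ≤ Real.sqrt (s : ℝ) * T := hCS
    have hQB : (1/(2*(n:ℝ))) * QQ ≤ lam * α * (Real.sqrt (s : ℝ) * T) := by
      have h2 : 0 ≤ (lam * α / 2) * ∑ k ∈ Gᶜ, L1 k :=
        mul_nonneg (by positivity) (Finset.sum_nonneg fun k _ => hL1nn k)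
      have h3 := mul_le_mul_of_nonneg_left hB (mul_pos hlam hα).le
      linarith [hmaster]
    have hQQle : QQ ≤ 2 * (n:ℝ) * (lam * α * (Real.sqrt (s : ℝ) * T)) := by
      have h := mul_le_mul_of_nonneg_left hQB (le_of_lt (by positivity : (0:ℝ) < 2 * (n:ℝ)))
      have e : 2 * (n:ℝ) * ((1/(2*(n:ℝ))) * QQ) = QQ := by field_simp
      rw [e] at h
      exact h
    have hkey : κ ^ 2 * T2 * (n:ℝ) ≤ (8 * (lam * α * (Real.sqrt (s : ℝ) * T))) * (n:ℝ) := by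
      nlinarith [hRE2, hQQle]
    have hdivn : κ ^ 2 * T2 ≤ 8 * (lam * α * (Real.sqrt (s : ℝ) * T)) :=
      (mul_le_mul_iff_left₀ hnR).mp hkey
    have hTform : (κ ^ 2 * T) * T ≤ (8 * Real.sqrt (s : ℝ) * (lam * α)) * T := by
      calc (κ ^ 2 * T) * T = κ ^ 2 * T2 := by rw [← hTT]; ring
        _ ≤ 8 * (lam * α * (Real.sqrt (s : ℝ) * T)) := hdivn
        _ = (8 * Real.sqrt (s : ℝ) * (lam * α)) * T := by ring
    have hdivT : κ ^ 2 * T ≤ 8 * Real.sqrt (s : ℝ) * (lam * α) :=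
      (mul_le_mul_iff_left₀ hTpos).mp hTform
    rw [le_div_iff₀ (by positivity : (0:ℝ) < κ ^ 2)]
    linarith
  -- off-support ℓ1 bound
  have hGcL1 : ∑ k ∈ Gᶜ, L1 k ≤ 2 * Real.sqrt (s : ℝ) * T := by
    have h1 : ∑ k ∈ G, (1 + 2 * (p k : ℝ)) * L1 k
        ≤ ∑ k ∈ G, 2 * ((1 + (p k : ℝ)) * (Real.sqrt (p k : ℝ) * Real.sqrt (L2 k))) := by
      apply Finset.sum_le_sum
      intro k _
      have h2 := hL1L2 k
      have h3 := hL1nn k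
      have hpk := hpR k
      nlinarith
    rw [← Finset.mul_sum] at h1
    calc ∑ k ∈ Gᶜ, L1 k ≤ ∑ k ∈ G, (1 + 2 * (p k : ℝ)) * L1 k := hcone
      _ ≤ 2 * ∑ k ∈ G, (1 + (p k : ℝ)) * (Real.sqrt (p k : ℝ) * Real.sqrt (L2 k)) := h1
      _ ≤ 2 * (Real.sqrt (s : ℝ) * T) := by linarith [hCS]
      _ = 2 * Real.sqrt (s : ℝ) * T := by ring
  -- total bound
  have htot : (∑ j : Σ k : Fin K, Fin (p k), (βh j - βstar j) ^ 2) ≤ (1 + 4 * (s : ℝ)) * T2 := by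
    have hsplit : (∑ j : Σ k : Fin K, Fin (p k), (βh j - βstar j) ^ 2)
        = ∑ k ∈ G, L2 k + ∑ k ∈ Gᶜ, L2 k := by
      rw [hsig (fun j => (βh j - βstar j) ^ 2)]
      exact (Finset.sum_add_sum_compl G L2).symm
    have hGpart : ∑ k ∈ G, L2 k ≤ T2 := by
      apply Finset.sum_le_sum
      intro k _
      have hpk := hpR k
      have h1 : (1:ℝ) ≤ (p k : ℝ) * (1 + (p k : ℝ)) ^ 2 := by nlinarith
      exact le_mul_of_one_le_left (hL2nn k) h1
    have hGcpart : ∑ k ∈ Gᶜ, L2 k ≤ 4 * (s : ℝ) * T2 := by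
      have h1 : ∑ k ∈ Gᶜ, L2 k ≤ ∑ k ∈ Gᶜ, (L1 k) ^ 2 := by
        apply Finset.sum_le_sum
        intro k _
        have h := sum_sq_le_sq_sum_of_nonneg (s := (univ : Finset (Fin (p k))))
          (f := fun j => |Δ ⟨k, j⟩|) (fun j _ => abs_nonneg _)
        have habs : ∑ j : Fin (p k), |Δ ⟨k, j⟩| ^ 2 = L2 k :=
          Finset.sum_congr rfl fun j _ => sq_abs _
        rw [habs] at h
        exact h
      have h2 : ∑ k ∈ Gᶜ, (L1 k) ^ 2 ≤ (∑ k ∈ Gᶜ, L1 k) ^ 2 :=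
        sum_sq_le_sq_sum_of_nonneg fun k _ => hL1nn k
      have h3 : (∑ k ∈ Gᶜ, L1 k) ^ 2 ≤ (2 * Real.sqrt (s : ℝ) * T) ^ 2 :=
        pow_le_pow_left₀ (Finset.sum_nonneg fun k _ => hL1nn k) hGcL1 2
      have h4 : (2 * Real.sqrt (s : ℝ) * T) ^ 2 = 4 * (s : ℝ) * T2 := by
        have hss : Real.sqrt (s : ℝ) ^ 2 = (s : ℝ) := Real.sq_sqrt hsnn
        have hTT : T ^ 2 = T2 := Real.sq_sqrt hT2nn
        calc (2 * Real.sqrt (s : ℝ) * T) ^ 2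
            = 4 * (Real.sqrt (s : ℝ) ^ 2) * (T ^ 2) := by ring
          _ = 4 * (s : ℝ) * T2 := by rw [hss, hTT]
      linarith
    rw [hsplit]
    linarith
  have hfin : Real.sqrt (∑ j : Σ k : Fin K, Fin (p k), (βh j - βstar j) ^ 2)
      ≤ (1 + 2 * Real.sqrt (s : ℝ)) * T := by
    have h1 : (∑ j : Σ k : Fin K, Fin (p k), (βh j - βstar j) ^ 2)
        ≤ ((1 + 2 * Real.sqrt (s : ℝ)) * T) ^ 2 := by
      have hss : Real.sqrt (s : ℝ) ^ 2 = (s : ℝ) := Real.sq_sqrt hsnn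
      have hTT : T ^ 2 = T2 := Real.sq_sqrt hT2nn
      nlinarith [htot, hTnn, Real.sqrt_nonneg (s : ℝ), hT2nn]
    calc Real.sqrt (∑ j : Σ k : Fin K, Fin (p k), (βh j - βstar j) ^ 2)
        ≤ Real.sqrt (((1 + 2 * Real.sqrt (s : ℝ)) * T) ^ 2) := Real.sqrt_le_sqrt h1
      _ = (1 + 2 * Real.sqrt (s : ℝ)) * T := Real.sqrt_sq (by positivity)
  calc Real.sqrt (∑ j : Σ k : Fin K, Fin (p k), (βh j - βstar j) ^ 2)
      ≤ (1 + 2 * Real.sqrt (s : ℝ)) * T := hfin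
    _ ≤ (1 + 2 * Real.sqrt (s : ℝ)) * (8 * Real.sqrt (s : ℝ) * (lam * α) / κ ^ 2) :=
        mul_le_mul_of_nonneg_left hT (by positivity)
    _ = (2 * Real.sqrt (s : ℝ) + 1) * (8 * Real.sqrt (s : ℝ) * (lam * α)) / κ ^ 2 := by ring
end
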